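/- Let $\widehat{L} = \begin{pmatrix} \ell_{11} & 0 \\ \ell_{21} & \ell_{22} \end{pmatrix}$ with $\ell_{11}, \ell_{22} > 0$, and consider $\widehat{Z} = -\widehat{P}(\widehat{A} + H\widehat{B}\widehat{C}) - (\widehat{A} + H\widehat{B}\widehat{C})^T\widehat{P}$ with $\widehat{P} = \widehat{L}\widehat{L}^T$, $\widehat{A} = \begin{pmatrix} -2 & 0 \\ 1 & 0 \end{pmatrix}$, $\widehat{B} = \begin{pmatrix} -c \\ 0 \end{pmatrix}$, $\widehat{C} = (0\ \ 1)$. Then the eigenvalues of $\widehat{L}^{-1}\widehat{Z}\widehat{L}^{-T}$ are $2 \pm \frac{\sqrt{(\ell_{11}^2 c H - 2\ell_{11}\ell_{21} + \ell_{21}^2 - \ell_{22}^2)^2 + 4\ell_{22}^2(\ell_{11} - \ell_{21})^2}}{\ell_{11}\ell_{22}}$. -/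

import Mathlib

open Matrix

theorem stmt_12 (c H l11 l21 l22 : ℝ) (hc : 0 < c) (h11 : 0 < l11) (h22 : 0 < l22)
    (Lh P A Z M : Matrix (Fin 2) (Fin 2) ℝ) (B : Matrix (Fin 2) (Fin 1) ℝ)
    (C : Matrix (Fin 1) (Fin 2) ℝ)
    (hL : Lh = !![l11, 0; l21, l22]) (hPdef : P = Lh * Lhᵀ)
    (hA : A = !![-2, 0; 1, 0]) (hB : B = !![-c; (0:ℝ)]) (hC : C = !![(0:ℝ), 1])
    (hZ : Z = -(P * (A + H • (B * C))) - (A + H • (B * C))ᵀ * P)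
    (hM : M = Lh⁻¹ * Z * (Lhᵀ)⁻¹) :
    ∀ μ : ℝ, (∃ v : Fin 2 → ℝ, v ≠ 0 ∧ M.mulVec v = μ • v) ↔
      μ = 2 + Real.sqrt ((l11^2 * c * H - 2*l11*l21 + l21^2 - l22^2)^2
            + 4*l22^2*(l11 - l21)^2) / (l11 * l22) ∨
      μ = 2 - Real.sqrt ((l11^2 * c * H - 2*l11*l21 + l21^2 - l22^2)^2
            + 4*l22^2*(l11 - l21)^2) / (l11 * l22) := by
  have ha : l11 ≠ 0 := ne_of_gt h11
  have hd : l22 ≠ 0 := ne_of_gt h22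
  have hLinv : Lh⁻¹ = !![1/l11, 0; -l21/(l11*l22), 1/l22] := by
    apply inv_eq_right_inv
    rw [hL]
    ext i j
    fin_cases i <;> fin_cases j <;>
      · simp [Matrix.mul_apply, Fin.sum_univ_two, Matrix.vecHead, Matrix.vecTail, Matrix.transpose_apply, Matrix.smul_apply]
        try field_simp
        try ring
  have hK : A + H • (B * C) = !![-2, -(c*H); 1, 0] := by
    rw [hA, hB, hC]
    ext i j
    fin_cases i <;> fin_cases j <;>
      simp [Matrix.mul_apply, Fin.sum_univ_one, Matrix.vecHead, Matrix.vecTail, Matrix.smul_apply] <;> ring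
  have hZval : Z = !![4*l11^2 - 2*l11*l21, l11^2*c*H + 2*l11*l21 - l21^2 - l22^2;
      l11^2*c*H + 2*l11*l21 - l21^2 - l22^2, 2*l11*l21*c*H] := by
    rw [hZ, hK, hPdef, hL]
    ext i j
    fin_cases i <;> fin_cases j <;>
      · simp [Matrix.mul_apply, Fin.sum_univ_two, Matrix.vecHead, Matrix.vecTail, Matrix.transpose_apply, Matrix.smul_apply, Matrix.vecMul, dotProduct]
        ring
  have hMval : M = !![4 - 2*l21/l11,
      (l11^2 * c * H - 2*l11*l21 + l21^2 - l22^2) / (l11 * l22);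
      (l11^2 * c * H - 2*l11*l21 + l21^2 - l22^2) / (l11 * l22), 2*l21/l11] := by
    rw [hM, hZval, ← Matrix.transpose_nonsing_inv, hLinv]
    ext i j
    fin_cases i <;> fin_cases j <;>
      · simp [Matrix.mul_apply, Fin.sum_univ_two, Matrix.vecHead, Matrix.vecTail, Matrix.transpose_apply, Matrix.smul_apply]
        field_simp
        all_goals ring
  set E : ℝ := (l11^2 * c * H - 2*l11*l21 + l21^2 - l22^2)^2 + 4*l22^2*(l11 - l21)^2 with hE
  have hE0 : 0 ≤ E := by positivity
  have hDsq : Real.sqrt E ^ 2 = E := Real.sq_sqrt hE0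
  intro μ
  have key : (∃ v : Fin 2 → ℝ, v ≠ 0 ∧ M.mulVec v = μ • v) ↔ (M - μ • 1).det = 0 := by
    rw [← Matrix.exists_mulVec_eq_zero_iff]
    constructor
    · rintro ⟨v, hv, hvv⟩
      exact ⟨v, hv, by rw [sub_mulVec, hvv, smul_mulVec, one_mulVec, sub_self]⟩
    · rintro ⟨v, hv, hvv⟩
      refine ⟨v, hv, ?_⟩
      rw [sub_mulVec, smul_mulVec, one_mulVec, sub_eq_zero] at hvv
      exact hvv
  have hsub : M - μ • (1 : Matrix (Fin 2) (Fin 2) ℝ) = !![4 - 2*l21/l11 - μ,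
      (l11^2 * c * H - 2*l11*l21 + l21^2 - l22^2) / (l11 * l22);
      (l11^2 * c * H - 2*l11*l21 + l21^2 - l22^2) / (l11 * l22), 2*l21/l11 - μ] := by
    rw [hMval]
    ext i j
    fin_cases i <;> fin_cases j <;> simp [Matrix.one_apply]
  have hdet : (M - μ • 1).det
      = (μ - (2 + Real.sqrt E / (l11*l22))) * (μ - (2 - Real.sqrt E / (l11*l22))) := by
    have h1 : (M - μ • 1).det = μ^2 - 4*μ + 4 - E/(l11*l22)^2 := by
      rw [hsub, Matrix.det_fin_two_of, hE]
      field_simp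
      ring
    have hk : Real.sqrt E / (l11*l22) * (Real.sqrt E / (l11*l22)) = E/(l11*l22)^2 := by
      rw [div_mul_div_comm, ← sq, ← sq, hDsq]
    rw [h1]
    linear_combination hk
  rw [key, hdet, mul_eq_zero, sub_eq_zero, sub_eq_zero, hE]
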